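/- Conversely, if a binary phylogenetic tree τ satisfies min(x_1+x_2, x_3+x_4) ≤ min{min(x_1+x_3, x_2+x_4), min(x_1+x_4, x_2+x_3)} for every inner edge (with X_1, X_2, X_3, X_4 the four parts as above), then τ is an NNI-local minimum of Φ_f for every strictly increasing f : {2,...,⌊n/2⌋} → ℝ≥0. -/

import Mathlib

open SimpleGraph

/-- An (unrooted) phylogenetic tree on `n` leaves with vertex type `V`:
a tree whose degree-one vertices are exactly the images of the `n` leaf labels. -/
structure PhyloTree (n : ℕ) (V : Type) [Fintype V] where
  G : SimpleGraph V
  isTree : G.IsTree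
  leaf : Fin n → V
  leaf_inj : Function.Injective leaf
  leaf_iff : ∀ v : V, (G.neighborSet v).ncard = 1 ↔ ∃ i, leaf i = v

variable {n : ℕ} {V : Type} [Fintype V]

/-- Number of leaves on the `u`-side after deleting the edge `{u,v}`. -/
noncomputable def splitSide (G : SimpleGraph V) (leaf : Fin n → V) (u v : V) : ℕ :=
  {i : Fin n | (G.deleteEdges {s(u, v)}).Reachable (leaf i) u}.ncard

/-- The size `‖σ‖ = min(|A|,|B|)` of the split induced by an edge. -/
noncomputable def splitSizeE (T : PhyloTree n V) : Sym2 V → ℕ :=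
  Sym2.lift ⟨fun u v => min (splitSide T.G T.leaf u v) (splitSide T.G T.leaf v u),
    fun _ _ => min_comm _ _⟩

/-- `Φ_f(τ) = ∑_{σ ∈ Σ*(τ)} f(‖σ‖)`, the sum over non-trivial splits (inner edges). -/
noncomputable def Phi (T : PhyloTree n V) (f : ℕ → ℝ) : ℝ :=
  ∑ᶠ e ∈ {e : Sym2 V | e ∈ T.G.edgeSet ∧ 2 ≤ splitSizeE T e}, f (splitSizeE T e)

/-- `m(τ)_j = |{σ ∈ Σ*(τ) : ‖σ‖ ≤ j}|`. -/
noncomputable def mseq (T : PhyloTree n V) (j : ℕ) : ℕ :=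
  {e : Sym2 V | e ∈ T.G.edgeSet ∧ 2 ≤ splitSizeE T e ∧ splitSizeE T e ≤ j}.ncard

/-- The split size sequence `s(τ)_i = min{j : m(τ)_j ≥ i}` (the left inverse of `m(τ)`). -/
noncomputable def sseq (T : PhyloTree n V) (i : ℕ) : ℕ :=
  sInf {j | i ≤ mseq T j}

def IsLeaf (T : PhyloTree n V) (v : V) : Prop := (T.G.neighborSet v).ncard = 1

/-- A binary (fully resolved) tree: every vertex has degree 1 or 3. -/
def IsBinary (T : PhyloTree n V) : Prop :=
  ∀ v : V, (T.G.neighborSet v).ncard = 1 ∨ (T.G.neighborSet v).ncard = 3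

/-- A caterpillar: a binary tree in which every inner vertex is adjacent to a leaf
(equivalently, the inner vertices form a path / there are exactly two cherries). -/
def IsCaterpillar (T : PhyloTree n V) : Prop :=
  IsBinary T ∧ ∀ v : V, ¬ IsLeaf T v → ∃ w : V, T.G.Adj v w ∧ IsLeaf T w

/-- A single NNI move across the inner edge `{u,v}`: the subtrees hanging at `a`
(on the `u` side) and at `b` (on the `v` side) are swapped. -/
def NNIMove (T T' : PhyloTree n V) : Prop :=
  ∃ u v a b : V, T.G.Adj u v ∧ ¬ IsLeaf T u ∧ ¬ IsLeaf T v ∧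
    T.G.Adj u a ∧ T.G.Adj v b ∧ a ≠ v ∧ b ≠ u ∧
    T'.leaf = T.leaf ∧
    T'.G.edgeSet = (T.G.edgeSet \ {s(u, a), s(v, b)}) ∪ {s(u, b), s(v, a)}

/-- The number of cherries = number of non-trivial splits of size exactly 2. -/
noncomputable def numCherries (T : PhyloTree n V) : ℕ :=
  {e : Sym2 V | e ∈ T.G.edgeSet ∧ splitSizeE T e = 2}.ncard

set_option linter.unusedSectionVars false
set_option maxHeartbeats 1000000

section AuxLemmas
variable {n : ℕ} {V : Type} [Fintype V]

lemma reach_transfer {H H' : SimpleGraph V} {x : V}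
    (h1 : ∀ w z, H.Adj w z → H.Reachable w x → H.Reachable z x → H'.Adj w z)
    (h2 : ∀ w z, H'.Adj w z → H.Reachable w x → H.Reachable z x) :
    ∀ w, H'.Reachable w x ↔ H.Reachable w x := by
  have mp : ∀ w t, H'.Walk w t → t = x → H.Reachable w x := by
    intro w t p
    induction p with
    | nil => intro h; rw [h]
    | @cons p1 p2 p3 hadj p ih =>
      intro ht
      exact h2 _ _ hadj.symm (ih ht)
  have mpr : ∀ w t, H.Walk w t → t = x → H'.Reachable w x := by
    intro w t p
    induction p with
    | nil => intro h; rw [h]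
    | @cons p1 p2 p3 hadj p ih =>
      intro ht
      have hw : H.Reachable p1 x := by
        refine Reachable.trans ⟨.cons hadj p⟩ ?_
        rw [ht]
      have hz : H.Reachable p2 x := by
        refine Reachable.trans ⟨p⟩ ?_
        rw [ht]
      exact ((h1 _ _ hadj hw hz).reachable).trans (ih ht)
  intro w
  constructor
  · intro h; obtain ⟨p⟩ := h; exact mp w x p rfl
  · intro h; obtain ⟨p⟩ := h; exact mpr w x p rfl

lemma reach_delete_of_avoid {G : SimpleGraph V} {x u : V} {e e' : Sym2 V}
    (hu : ¬ (G.deleteEdges {e}).Reachable u x) (hue' : u ∈ e') :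
    ∀ w, (G.deleteEdges {e}).Reachable w x → (G.deleteEdges {e'}).Reachable w x := by
  have main : ∀ w t, (G.deleteEdges {e}).Walk w t → t = x → (G.deleteEdges {e'}).Reachable w x := by
    intro w t p
    induction p with
    | nil => intro h; rw [h]
    | @cons p1 p2 p3 hadj p ih =>
      intro ht
      have hne : s(p1, p2) ≠ e' := by
        intro h
        rcases Sym2.mem_iff.mp (h ▸ hue') with hh | hh
        · apply hu
          rw [hh, ← ht]
          exact ⟨.cons hadj p⟩
        · apply hu
          rw [hh, ← ht]
          exact ⟨p⟩
      have hadj' : (G.deleteEdges {e'}).Adj p1 p2 :=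
        SimpleGraph.deleteEdges_adj.mpr ⟨(SimpleGraph.deleteEdges_adj.mp hadj).1, by simpa using hne⟩
      exact hadj'.reachable.trans (ih ht)
  intro w hw; obtain ⟨p⟩ := hw; exact main w x p rfl

lemma reach_or {G : SimpleGraph V} {x y : V} :
    ∀ w, G.Reachable w x →
      (G.deleteEdges {s(x,y)}).Reachable w x ∨ (G.deleteEdges {s(x,y)}).Reachable w y := by
  have main : ∀ w t, G.Walk w t → t = x →
      (G.deleteEdges {s(x,y)}).Reachable w x ∨ (G.deleteEdges {s(x,y)}).Reachable w y := by
    intro w t p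
    induction p with
    | nil => intro h; rw [h]; exact Or.inl Reachable.rfl
    | @cons p1 p2 p3 hadj p ih =>
      intro ht
      by_cases he : s(p1, p2) = s(x, y)
      · rcases Sym2.eq_iff.mp he with ⟨hw, -⟩ | ⟨hw, -⟩
        · rw [hw]; exact Or.inl Reachable.rfl
        · rw [hw]; exact Or.inr Reachable.rfl
      · have hadj' : (G.deleteEdges {s(x,y)}).Adj p1 p2 :=
          SimpleGraph.deleteEdges_adj.mpr ⟨hadj, by simpa using he⟩
        rcases ih ht with h | h
        · exact Or.inl (hadj'.reachable.trans h)
        · exact Or.inr (hadj'.reachable.trans h)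
  intro w hw; obtain ⟨p⟩ := hw; exact main w x p rfl

lemma compl_side {G : SimpleGraph V} (hc : G.Preconnected) {x y : V}
    (hbr : ¬(G.deleteEdges {s(x,y)}).Reachable x y) (leaf : Fin n → V) :
    {i : Fin n | (G.deleteEdges {s(x,y)}).Reachable (leaf i) y}
      = {i : Fin n | (G.deleteEdges {s(x,y)}).Reachable (leaf i) x}ᶜ := by
  ext i
  simp only [Set.mem_setOf_eq, Set.mem_compl_iff]
  constructor
  · intro hy hx
    exact hbr (hx.symm.trans hy)
  · intro hx
    rcases reach_or (y := y) (leaf i) (hc (leaf i) x) with h | h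
    · exact absurd h hx
    · exact h

lemma splitSide_add {G : SimpleGraph V} (hc : G.Preconnected) {x y : V}
    (hbr : ¬(G.deleteEdges {s(x,y)}).Reachable x y) (leaf : Fin n → V) :
    splitSide G leaf x y + splitSide G leaf y x = n := by
  unfold splitSide
  rw [show s(y,x) = s(x,y) from Sym2.eq_swap, compl_side hc hbr leaf,
    Set.ncard_add_ncard_compl]
  simp [Nat.card_eq_fintype_card]

lemma tri_absurd {G : SimpleGraph V} {x y z : V}
    (hbr : ¬(G.deleteEdges {s(x,y)}).Reachable x y)
    (hxz : G.Adj x z) (hzy : G.Adj z y) : False := by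
  have hxy : x ≠ y := by rintro rfl; exact hbr Reachable.rfl
  apply hbr
  have h1 : (G.deleteEdges {s(x,y)}).Adj x z := by
    refine SimpleGraph.deleteEdges_adj.mpr ⟨hxz, ?_⟩
    simp only [Set.mem_singleton_iff]
    intro h
    rcases Sym2.eq_iff.mp h with ⟨-, h2⟩ | ⟨h1, -⟩
    · exact hzy.ne h2
    · exact hxy h1
  have h2 : (G.deleteEdges {s(x,y)}).Adj z y := by
    refine SimpleGraph.deleteEdges_adj.mpr ⟨hzy, ?_⟩
    simp only [Set.mem_singleton_iff]
    intro h
    rcases Sym2.eq_iff.mp h with ⟨h1, -⟩ | ⟨-, h2⟩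
    · exact hxz.ne' h1
    · exact hxy h2.symm
  exact h1.reachable.trans h2.reachable

lemma decomp {G : SimpleGraph V} (leaf : Fin n → V) {u v c d : V}
    (hbc : ¬(G.deleteEdges {s(u,c)}).Reachable u c)
    (hbd : ¬(G.deleteEdges {s(u,d)}).Reachable u d)
    (hav : G.Adj u v) (hac : G.Adj u c) (had : G.Adj u d)
    (hcv : c ≠ v) (hdv : d ≠ v) (hcd : c ≠ d)
    (hnbr : ∀ w, G.Adj u w → w = v ∨ w = c ∨ w = d)
    (hleaf : ∀ i, leaf i ≠ u) :
    splitSide G leaf u v = splitSide G leaf c u + splitSide G leaf d u := by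
  have hcu : c ≠ u := hac.ne'
  have hdu : d ≠ u := had.ne'
  have bwd : ∀ (c' : V), G.Adj u c' → c' ≠ v → (¬(G.deleteEdges {s(u,c')}).Reachable u c') →
      ∀ w, (G.deleteEdges {s(u,c')}).Reachable w c' → (G.deleteEdges {s(u,v)}).Reachable w u := by
    intro c' hac' hc'v hb w hw
    have h1 := reach_delete_of_avoid (e' := s(u,v)) hb (Sym2.mem_mk_left u v) w hw
    refine h1.trans (SimpleGraph.Adj.reachable ?_)
    refine SimpleGraph.deleteEdges_adj.mpr ⟨hac'.symm, ?_⟩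
    simp only [Set.mem_singleton_iff]
    intro h
    rcases Sym2.eq_iff.mp h with ⟨h1', -⟩ | ⟨h1', -⟩
    · exact hac'.ne' h1'
    · exact hc'v h1'
  have disj : ∀ w, (G.deleteEdges {s(u,c)}).Reachable w c →
      (G.deleteEdges {s(u,d)}).Reachable w d → False := by
    intro w h1 h2
    have h2' : (G.deleteEdges {s(u,c)}).Reachable w d :=
      reach_delete_of_avoid (e' := s(u,c)) hbd (Sym2.mem_mk_left u c) w h2
    apply hbc
    have hud : (G.deleteEdges {s(u,c)}).Adj u d := by
      refine SimpleGraph.deleteEdges_adj.mpr ⟨had, ?_⟩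
      simp only [Set.mem_singleton_iff]
      intro h
      rcases Sym2.eq_iff.mp h with ⟨-, h2''⟩ | ⟨h1'', -⟩
      · exact hcd h2''.symm
      · exact hcu h1''.symm
    exact hud.reachable.trans (h2'.symm.trans h1)
  have fwd : ∀ (w t : V), (G.deleteEdges {s(u,v)}).Walk w t → t = u →
      w = u ∨ (G.deleteEdges {s(u,c)}).Reachable w c ∨ (G.deleteEdges {s(u,d)}).Reachable w d := by
    intro w t p
    induction p with
    | nil => intro h; exact Or.inl h
    | @cons p1 p2 p3 hadj p ih =>
      intro ht
      rcases ih ht with hzu | hC | hD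
      · rw [hzu] at hadj
        have hw' := SimpleGraph.deleteEdges_adj.mp hadj
        rcases hnbr p1 hw'.1.symm with hwv | hwc | hwd
        · rw [hwv] at hw'
          exact absurd (Set.mem_singleton_iff.mpr Sym2.eq_swap) hw'.2
        · refine Or.inr (Or.inl ?_)
          rw [hwc]
        · refine Or.inr (Or.inr ?_)
          rw [hwd]
      · by_cases he : s(p1, p2) = s(u,c)
        · rcases Sym2.eq_iff.mp he with ⟨h1, -⟩ | ⟨-, h2⟩
          · exact Or.inl h1
          · rw [h2] at hC
            exact absurd hC hbc
        · have hadj' : (G.deleteEdges {s(u,c)}).Adj p1 p2 :=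
            SimpleGraph.deleteEdges_adj.mpr ⟨(SimpleGraph.deleteEdges_adj.mp hadj).1, by simpa using he⟩
          exact Or.inr (Or.inl (hadj'.reachable.trans hC))
      · by_cases he : s(p1, p2) = s(u,d)
        · rcases Sym2.eq_iff.mp he with ⟨h1, -⟩ | ⟨-, h2⟩
          · exact Or.inl h1
          · rw [h2] at hD
            exact absurd hD hbd
        · have hadj' : (G.deleteEdges {s(u,d)}).Adj p1 p2 :=
            SimpleGraph.deleteEdges_adj.mpr ⟨(SimpleGraph.deleteEdges_adj.mp hadj).1, by simpa using he⟩
          exact Or.inr (Or.inr (hadj'.reachable.trans hD))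
  have hset : {i : Fin n | (G.deleteEdges {s(u,v)}).Reachable (leaf i) u}
      = {i : Fin n | (G.deleteEdges {s(u,c)}).Reachable (leaf i) c}
        ∪ {i : Fin n | (G.deleteEdges {s(u,d)}).Reachable (leaf i) d} := by
    ext i
    simp only [Set.mem_setOf_eq, Set.mem_union]
    constructor
    · intro h
      obtain ⟨p⟩ := h
      rcases fwd _ _ p rfl with h' | h' | h'
      · exact absurd h' (hleaf i)
      · exact Or.inl h'
      · exact Or.inr h'
    · rintro (h | h)
      · exact bwd c hac hcv hbc _ h
      · exact bwd d had hdv hbd _ h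
  have hdisj : Disjoint {i : Fin n | (G.deleteEdges {s(u,c)}).Reachable (leaf i) c}
      {i : Fin n | (G.deleteEdges {s(u,d)}).Reachable (leaf i) d} :=
    Set.disjoint_left.mpr fun {i} h1 h2 => disj _ h1 h2
  unfold splitSide
  rw [show s(c,u) = s(u,c) from Sym2.eq_swap, show s(d,u) = s(u,d) from Sym2.eq_swap, hset,
    Set.ncard_union_eq hdisj (Set.toFinite _) (Set.toFinite _)]

end AuxLemmas


/-- Converse: if every inner edge of `τ` satisfies the quartet inequality
`min(x₁+x₂, x₃+x₄) ≤ min{min(x₁+x₃, x₂+x₄), min(x₁+x₄, x₂+x₃)}`, then `τ` is an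
NNI-local minimum of `Φ_f` for every strictly increasing `f`. -/
theorem stmt_13 {n : ℕ} {V : Type} [Fintype V]
    (T : PhyloTree n V) (hbin : IsBinary T)
    (hineq : ∀ u v a1 a2 b1 b2 : V,
      T.G.Adj u v → ¬ IsLeaf T u → ¬ IsLeaf T v →
      T.G.Adj u a1 → T.G.Adj u a2 → a1 ≠ a2 → a1 ≠ v → a2 ≠ v →
      T.G.Adj v b1 → T.G.Adj v b2 → b1 ≠ b2 → b1 ≠ u → b2 ≠ u →
      min (splitSide T.G T.leaf a1 u + splitSide T.G T.leaf a2 u)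
          (splitSide T.G T.leaf b1 v + splitSide T.G T.leaf b2 v) ≤
        min (min (splitSide T.G T.leaf a1 u + splitSide T.G T.leaf b1 v)
              (splitSide T.G T.leaf a2 u + splitSide T.G T.leaf b2 v))
            (min (splitSide T.G T.leaf a1 u + splitSide T.G T.leaf b2 v)
              (splitSide T.G T.leaf a2 u + splitSide T.G T.leaf b1 v))) :
    ∀ f : ℕ → ℝ, (∀ k, 2 ≤ k → k ≤ n / 2 → 0 ≤ f k) →
      (∀ a b, 2 ≤ a → a < b → b ≤ n / 2 → f a < f b) →
      ∀ T' : PhyloTree n V, NNIMove T T' → Phi T f ≤ Phi T' f := by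
  intro f hf0 hfmono T' hmove
  classical
  obtain ⟨u, v, a, b, huv, hlu, hlv, hua, hvb, hav, hbu, hleafEq, hE⟩ := hmove
  have hconn : T.G.Preconnected := T.isTree.isConnected.preconnected
  have hconn' : T'.G.Preconnected := T'.isTree.isConnected.preconnected
  have hbrT : ∀ {p q : V}, T.G.Adj p q → ¬(T.G.deleteEdges {s(p,q)}).Reachable p q :=
    fun h => ((isAcyclic_iff_forall_adj_isBridge.mp T.isTree.IsAcyclic) h)
  have hbrT' : ∀ {p q : V}, T'.G.Adj p q → ¬(T'.G.deleteEdges {s(p,q)}).Reachable p q :=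
    fun h => ((isAcyclic_iff_forall_adj_isBridge.mp T'.isTree.IsAcyclic) h)
  -- basic distinctness
  have hUV : u ≠ v := huv.ne
  have hau : a ≠ u := hua.ne'
  have hbv : b ≠ v := hvb.ne'
  -- Sym2 inequality helper
  have sne : ∀ {p q r s : V}, (p ≠ r ∨ q ≠ s) → (p ≠ s ∨ q ≠ r) → s(p,q) ≠ s(r,s) := by
    intro p q r s h1 h2 h
    rcases Sym2.eq_iff.mp h with ⟨e1, e2⟩ | ⟨e1, e2⟩
    · rcases h1 with h | h
      · exact h e1
      · exact h e2
    · rcases h2 with h | h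
      · exact h e1
      · exact h e2
  -- no triangles
  have hnub : ¬ T.G.Adj u b := fun h => tri_absurd (hbrT huv) h hvb.symm
  have hnva : ¬ T.G.Adj v a := fun h => tri_absurd (hbrT huv) hua h.symm
  have hab : a ≠ b := fun h => hnva (h ▸ hvb)
  -- edge set characterization of T'
  have hE' : ∀ e, e ∈ T'.G.edgeSet ↔
      ((e ∈ T.G.edgeSet ∧ e ≠ s(u,a) ∧ e ≠ s(v,b)) ∨ e = s(u,b) ∨ e = s(v,a)) := by
    intro e
    rw [hE]
    simp only [Set.mem_union, Set.mem_diff, Set.mem_insert_iff, Set.mem_singleton_iff, not_or]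
  have hAdj' : ∀ p q : V, T'.G.Adj p q ↔
      ((T.G.Adj p q ∧ s(p,q) ≠ s(u,a) ∧ s(p,q) ≠ s(v,b)) ∨ s(p,q) = s(u,b) ∨ s(p,q) = s(v,a)) := by
    intro p q
    rw [← SimpleGraph.mem_edgeSet, hE' s(p,q), SimpleGraph.mem_edgeSet]
  -- T' adjacency basics
  have hT'uv : T'.G.Adj u v := by
    refine (hAdj' u v).mpr (Or.inl ⟨huv, ?_, ?_⟩)
    · exact sne (Or.inr hav.symm) (Or.inl hau.symm)
    · exact sne (Or.inl hUV) (Or.inl (Ne.symm hbu))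
  have hT'ub : T'.G.Adj u b := (hAdj' u b).mpr (Or.inr (Or.inl rfl))
  have hT'va : T'.G.Adj v a := (hAdj' v a).mpr (Or.inr (Or.inr rfl))
  -- third neighbours a2 of u and b2 of v in T
  have hNu3 : (T.G.neighborSet u).ncard = 3 := (hbin u).resolve_left hlu
  have hNv3 : (T.G.neighborSet v).ncard = 3 := (hbin v).resolve_left hlv
  have third : ∀ (w x y : V), (T.G.neighborSet w).ncard = 3 → T.G.Adj w x → T.G.Adj w y →
      x ≠ y → ∃ z, T.G.Adj w z ∧ z ≠ x ∧ z ≠ y ∧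
        (∀ t, T.G.Adj w t → t = x ∨ t = y ∨ t = z) := by
    intro w x y h3 hx hy hxy
    have hsub : ({x, y} : Set V).ncard ≤ 2 :=
      le_trans (Set.ncard_insert_le _ _) (by simp)
    have hdiff := Set.ncard_le_ncard_diff_add_ncard (T.G.neighborSet w) {x, y} (Set.toFinite _)
    have hne : (T.G.neighborSet w \ {x, y}).ncard ≠ 0 := by omega
    obtain ⟨z, hz⟩ := Set.nonempty_of_ncard_ne_zero hne
    obtain ⟨hz1, hz2⟩ := hz
    simp only [Set.mem_insert_iff, Set.mem_singleton_iff, not_or] at hz2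
    refine ⟨z, hz1, hz2.1, hz2.2, ?_⟩
    have hsub2 : ({x, y, z} : Set V) ⊆ T.G.neighborSet w := by
      rintro t (rfl | rfl | rfl)
      · exact hx
      · exact hy
      · exact hz1
    have hcard : ({x, y, z} : Set V).ncard = 3 := by
      rw [Set.ncard_insert_of_notMem (by simp [hxy, Ne.symm hz2.1]),
        Set.ncard_insert_of_notMem (by simp [Ne.symm hz2.2]), Set.ncard_singleton]
    have heq : ({x, y, z} : Set V) = T.G.neighborSet w :=
      Set.eq_of_subset_of_ncard_le hsub2 (by omega) (Set.toFinite _)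
    intro t ht
    have : t ∈ ({x, y, z} : Set V) := heq ▸ ht
    simpa using this
  obtain ⟨a2, hua2, ha2v, ha2a, hNbu⟩ := third u v a hNu3 huv hua hav.symm
  obtain ⟨b2, hvb2, hb2u, hb2b, hNbv⟩ := third v u b hNv3 huv.symm hvb (Ne.symm hbu)
  have ha2u : a2 ≠ u := hua2.ne'
  have hb2v : b2 ≠ v := hvb2.ne'
  have ha2b : a2 ≠ b := fun h => hnub (h ▸ hua2)
  have hb2a : b2 ≠ a := fun h => hnva (h ▸ hvb2)
  have hT'ua2 : T'.G.Adj u a2 := by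
    refine (hAdj' u a2).mpr (Or.inl ⟨hua2, ?_, ?_⟩)
    · exact sne (Or.inr ha2a) (Or.inl hau.symm)
    · exact sne (Or.inl hUV) (Or.inl (Ne.symm hbu))
  have hT'vb2 : T'.G.Adj v b2 := by
    refine (hAdj' v b2).mpr (Or.inl ⟨hvb2, ?_, ?_⟩)
    · exact sne (Or.inl hUV.symm) (Or.inl hav.symm)
    · exact sne (Or.inr hb2b) (Or.inl hbv.symm)
  -- leaf avoidance
  have hlfu : ∀ i, T.leaf i ≠ u := fun i h => hlu ((T.leaf_iff u).mpr ⟨i, h⟩)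
  have hlfv : ∀ i, T.leaf i ≠ v := fun i h => hlv ((T.leaf_iff v).mpr ⟨i, h⟩)
  have two_nbrs_not_leaf : ∀ (w x y : V), T'.G.Adj w x → T'.G.Adj w y → x ≠ y →
      ∀ i, T'.leaf i ≠ w := by
    intro w x y hx hy hxy i h
    have h1 := (T'.leaf_iff w).mpr ⟨i, h⟩
    rw [Set.ncard_eq_one] at h1
    obtain ⟨t, ht⟩ := h1
    have h2 : x ∈ T'.G.neighborSet w := hx
    have h3 : y ∈ T'.G.neighborSet w := hy
    rw [ht] at h2 h3
    simp only [Set.mem_singleton_iff] at h2 h3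
    exact hxy (h2.trans h3.symm)
  have hlfu' : ∀ i, T'.leaf i ≠ u := two_nbrs_not_leaf u v b hT'uv hT'ub (Ne.symm hbv) -- v ≠ b
  have hlfv' : ∀ i, T'.leaf i ≠ v := two_nbrs_not_leaf v u a hT'uv.symm hT'va hau.symm
  -- neighbour characterizations in T'
  have hNbu' : ∀ w, T'.G.Adj u w → w = v ∨ w = a2 ∨ w = b := by
    intro w hw
    rcases (hAdj' u w).mp hw with ⟨h1, h2, -⟩ | h | h
    · rcases hNbu w h1 with h' | h' | h'
      · exact Or.inl h'
      · exact absurd (by rw [h'] : s(u,w) = s(u,a)) h2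
      · exact Or.inr (Or.inl h')
    · rcases Sym2.eq_iff.mp h with ⟨-, h2'⟩ | ⟨h1', -⟩
      · exact Or.inr (Or.inr h2')
      · exact absurd h1'.symm hbu
    · rcases Sym2.eq_iff.mp h with ⟨h1', -⟩ | ⟨h1', -⟩
      · exact absurd h1' hUV
      · exact absurd h1'.symm hau
  have hNbv' : ∀ w, T'.G.Adj v w → w = u ∨ w = a ∨ w = b2 := by
    intro w hw
    rcases (hAdj' v w).mp hw with ⟨h1, -, h3⟩ | h | h
    · rcases hNbv w h1 with h' | h' | h'
      · exact Or.inl h'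
      · exact absurd (by rw [h'] : s(v,w) = s(v,b)) h3
      · exact Or.inr (Or.inr h')
    · rcases Sym2.eq_iff.mp h with ⟨h1', -⟩ | ⟨h1', -⟩
      · exact absurd h1' hUV.symm
      · exact absurd h1' (Ne.symm hbv)
    · rcases Sym2.eq_iff.mp h with ⟨-, h2'⟩ | ⟨h1', -⟩
      · exact Or.inr (Or.inl h2')
      · exact absurd h1'.symm hav
  -- Claim A: the subtree at `a` is unchanged when edge ua is replaced by va
  have CA : ∀ w, (T'.G.deleteEdges {s(v,a)}).Reachable w a ↔
      (T.G.deleteEdges {s(u,a)}).Reachable w a := by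
    have huW : ¬ (T.G.deleteEdges {s(u,a)}).Reachable u a := hbrT hua
    have hvW : ¬ (T.G.deleteEdges {s(u,a)}).Reachable v a := by
      intro h
      apply huW
      refine (SimpleGraph.Adj.reachable ?_).trans h
      refine SimpleGraph.deleteEdges_adj.mpr ⟨huv, ?_⟩
      simp only [Set.mem_singleton_iff]
      exact sne (Or.inr hav.symm) (Or.inl hau.symm)
    have hbW : ¬ (T.G.deleteEdges {s(u,a)}).Reachable b a := by
      intro h
      apply hvW
      refine (SimpleGraph.Adj.reachable ?_).trans h
      refine SimpleGraph.deleteEdges_adj.mpr ⟨hvb, ?_⟩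
      simp only [Set.mem_singleton_iff]
      exact sne (Or.inl hUV.symm) (Or.inl hav.symm)
    apply reach_transfer
    · intro w z hadj hw hz
      obtain ⟨h1, h2⟩ := SimpleGraph.deleteEdges_adj.mp hadj
      simp only [Set.mem_singleton_iff] at h2
      refine SimpleGraph.deleteEdges_adj.mpr ⟨?_, ?_⟩
      · refine (hAdj' w z).mpr (Or.inl ⟨h1, h2, ?_⟩)
        intro h
        rcases Sym2.eq_iff.mp h with ⟨hwv, -⟩ | ⟨-, hzv⟩
        · rw [hwv] at hw; exact hvW hw
        · rw [hzv] at hz; exact hvW hz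
      · simp only [Set.mem_singleton_iff]
        intro h
        rcases Sym2.eq_iff.mp h with ⟨hwv, -⟩ | ⟨-, hzv⟩
        · rw [hwv] at hw; exact hvW hw
        · rw [hzv] at hz; exact hvW hz
    · intro w z hadj hw
      obtain ⟨h1, h2⟩ := SimpleGraph.deleteEdges_adj.mp hadj
      simp only [Set.mem_singleton_iff] at h2
      rcases (hAdj' w z).mp h1 with ⟨h3, h4, -⟩ | h | h
      · refine (SimpleGraph.Adj.reachable ?_).trans hw
        refine SimpleGraph.deleteEdges_adj.mpr ⟨h3.symm, ?_⟩
        simp only [Set.mem_singleton_iff]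
        rw [show s(z,w) = s(w,z) from Sym2.eq_swap]
        exact h4
      · rcases Sym2.eq_iff.mp h with ⟨hwu, -⟩ | ⟨hwb, -⟩
        · rw [hwu] at hw; exact absurd hw huW
        · rw [hwb] at hw; exact absurd hw hbW
      · exact absurd h h2
  -- Claim B: the subtree at `b` is unchanged when edge vb is replaced by ub
  have CB : ∀ w, (T'.G.deleteEdges {s(u,b)}).Reachable w b ↔
      (T.G.deleteEdges {s(v,b)}).Reachable w b := by
    have hvW : ¬ (T.G.deleteEdges {s(v,b)}).Reachable v b := hbrT hvb
    have huW : ¬ (T.G.deleteEdges {s(v,b)}).Reachable u b := by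
      intro h
      apply hvW
      refine (SimpleGraph.Adj.reachable ?_).trans h
      refine SimpleGraph.deleteEdges_adj.mpr ⟨huv.symm, ?_⟩
      simp only [Set.mem_singleton_iff]
      exact sne (Or.inr (Ne.symm hbu)) (Or.inl (Ne.symm hbv))
    have haW : ¬ (T.G.deleteEdges {s(v,b)}).Reachable a b := by
      intro h
      apply huW
      refine (SimpleGraph.Adj.reachable ?_).trans h
      refine SimpleGraph.deleteEdges_adj.mpr ⟨hua, ?_⟩
      simp only [Set.mem_singleton_iff]
      exact sne (Or.inl hUV) (Or.inl (Ne.symm hbu))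
    apply reach_transfer
    · intro w z hadj hw hz
      obtain ⟨h1, h2⟩ := SimpleGraph.deleteEdges_adj.mp hadj
      simp only [Set.mem_singleton_iff] at h2
      refine SimpleGraph.deleteEdges_adj.mpr ⟨?_, ?_⟩
      · refine (hAdj' w z).mpr (Or.inl ⟨h1, ?_, h2⟩)
        intro h
        rcases Sym2.eq_iff.mp h with ⟨hwu, -⟩ | ⟨-, hzu⟩
        · rw [hwu] at hw; exact huW hw
        · rw [hzu] at hz; exact huW hz
      · simp only [Set.mem_singleton_iff]
        intro h
        rcases Sym2.eq_iff.mp h with ⟨hwu, -⟩ | ⟨-, hzu⟩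
        · rw [hwu] at hw; exact huW hw
        · rw [hzu] at hz; exact huW hz
    · intro w z hadj hw
      obtain ⟨h1, h2⟩ := SimpleGraph.deleteEdges_adj.mp hadj
      simp only [Set.mem_singleton_iff] at h2
      rcases (hAdj' w z).mp h1 with ⟨h3, -, h4⟩ | h | h
      · refine (SimpleGraph.Adj.reachable ?_).trans hw
        refine SimpleGraph.deleteEdges_adj.mpr ⟨h3.symm, ?_⟩
        simp only [Set.mem_singleton_iff]
        rw [show s(z,w) = s(w,z) from Sym2.eq_swap]
        exact h4
      · exact absurd h h2
      · rcases Sym2.eq_iff.mp h with ⟨hwv, -⟩ | ⟨hwa, -⟩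
        · rw [hwv] at hw; exact absurd hw hvW
        · rw [hwa] at hw; exact absurd hw haW
  -- Claim C: all other edges keep their splits
  have CC : ∀ (p q : V), T.G.Adj p q → s(p,q) ≠ s(u,v) → s(p,q) ≠ s(u,a) → s(p,q) ≠ s(v,b) →
      ¬ (T.G.deleteEdges {s(p,q)}).Reachable u p →
      ∀ w, (T'.G.deleteEdges {s(p,q)}).Reachable w p ↔
        (T.G.deleteEdges {s(p,q)}).Reachable w p := by
    intro p q hpq hne_uv hne_ua hne_vb hup
    have hvp : ¬ (T.G.deleteEdges {s(p,q)}).Reachable v p := by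
      intro h
      apply hup
      refine (SimpleGraph.Adj.reachable ?_).trans h
      exact SimpleGraph.deleteEdges_adj.mpr ⟨huv, by simp only [Set.mem_singleton_iff]; exact Ne.symm hne_uv⟩
    have hap : ¬ (T.G.deleteEdges {s(p,q)}).Reachable a p := by
      intro h
      apply hup
      refine (SimpleGraph.Adj.reachable ?_).trans h
      exact SimpleGraph.deleteEdges_adj.mpr ⟨hua, by simp only [Set.mem_singleton_iff]; exact Ne.symm hne_ua⟩
    have hbp : ¬ (T.G.deleteEdges {s(p,q)}).Reachable b p := by
      intro h
      apply hvp
      refine (SimpleGraph.Adj.reachable ?_).trans h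
      exact SimpleGraph.deleteEdges_adj.mpr ⟨hvb, by simp only [Set.mem_singleton_iff]; exact Ne.symm hne_vb⟩
    apply reach_transfer
    · intro w z hadj hw hz
      obtain ⟨h1, h2⟩ := SimpleGraph.deleteEdges_adj.mp hadj
      simp only [Set.mem_singleton_iff] at h2
      refine SimpleGraph.deleteEdges_adj.mpr ⟨?_, by simp only [Set.mem_singleton_iff]; exact h2⟩
      refine (hAdj' w z).mpr (Or.inl ⟨h1, ?_, ?_⟩)
      · intro h
        rcases Sym2.eq_iff.mp h with ⟨hwu, -⟩ | ⟨hwa, -⟩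
        · rw [hwu] at hw; exact hup hw
        · rw [hwa] at hw; exact hap hw
      · intro h
        rcases Sym2.eq_iff.mp h with ⟨hwv, -⟩ | ⟨hwb, -⟩
        · rw [hwv] at hw; exact hvp hw
        · rw [hwb] at hw; exact hbp hw
    · intro w z hadj hw
      obtain ⟨h1, h2⟩ := SimpleGraph.deleteEdges_adj.mp hadj
      simp only [Set.mem_singleton_iff] at h2
      rcases (hAdj' w z).mp h1 with ⟨h3, -, -⟩ | h | h
      · refine (SimpleGraph.Adj.reachable ?_).trans hw
        refine SimpleGraph.deleteEdges_adj.mpr ⟨h3.symm, ?_⟩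
        simp only [Set.mem_singleton_iff]
        rw [show s(z,w) = s(w,z) from Sym2.eq_swap]
        exact h2
      · rcases Sym2.eq_iff.mp h with ⟨hwu, -⟩ | ⟨hwb, -⟩
        · rw [hwu] at hw; exact absurd hw hup
        · rw [hwb] at hw; exact absurd hw hbp
      · rcases Sym2.eq_iff.mp h with ⟨hwv, -⟩ | ⟨hwa, -⟩
        · rw [hwv] at hw; exact absurd hw hvp
        · rw [hwa] at hw; exact absurd hw hap
  -- side equalities
  have sideCA : splitSide T'.G T'.leaf a v = splitSide T.G T.leaf a u := by
    unfold splitSide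
    rw [hleafEq, show s(a,v) = s(v,a) from Sym2.eq_swap, show s(a,u) = s(u,a) from Sym2.eq_swap]
    congr 1
    ext i
    simp only [Set.mem_setOf_eq]
    exact CA (T.leaf i)
  have sideCB : splitSide T'.G T'.leaf b u = splitSide T.G T.leaf b v := by
    unfold splitSide
    rw [hleafEq, show s(b,u) = s(u,b) from Sym2.eq_swap, show s(b,v) = s(v,b) from Sym2.eq_swap]
    congr 1
    ext i
    simp only [Set.mem_setOf_eq]
    exact CB (T.leaf i)
  have sideCC : ∀ p q : V, T.G.Adj p q → s(p,q) ≠ s(u,v) → s(p,q) ≠ s(u,a) → s(p,q) ≠ s(v,b) →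
      ¬ (T.G.deleteEdges {s(p,q)}).Reachable u p →
      splitSide T'.G T'.leaf p q = splitSide T.G T.leaf p q := by
    intro p q hpq h1 h2 h3 h4
    unfold splitSide
    rw [hleafEq]
    congr 1
    ext i
    simp only [Set.mem_setOf_eq]
    exact CC p q hpq h1 h2 h3 h4 (T.leaf i)
  -- min-size equality from one-sided equality
  have hsize : ∀ p q p' q' : V, T.G.Adj p q → T'.G.Adj p' q' →
      splitSide T'.G T'.leaf p' q' = splitSide T.G T.leaf p q →
      splitSizeE T' s(p',q') = splitSizeE T s(p,q) := by
    intro p q p' q' h1 h2 h3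
    have e1 := splitSide_add hconn (hbrT h1) T.leaf
    have e2 := splitSide_add hconn' (hbrT' h2) T'.leaf
    simp only [splitSizeE, Sym2.lift_mk]
    omega
  -- the three matched-size facts
  have sizeA : splitSizeE T' s(v,a) = splitSizeE T s(u,a) := by
    have h := hsize a u a v hua.symm hT'va.symm sideCA
    rw [show s(a,v) = s(v,a) from Sym2.eq_swap, show s(a,u) = s(u,a) from Sym2.eq_swap] at h
    exact h
  have sizeB : splitSizeE T' s(u,b) = splitSizeE T s(v,b) := by
    have h := hsize b v b u hvb.symm hT'ub.symm sideCB
    rw [show s(b,u) = s(u,b) from Sym2.eq_swap, show s(b,v) = s(v,b) from Sym2.eq_swap] at h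
    exact h
  have sizeC : ∀ p q : V, T.G.Adj p q → s(p,q) ≠ s(u,v) → s(p,q) ≠ s(u,a) → s(p,q) ≠ s(v,b) →
      splitSizeE T' s(p,q) = splitSizeE T s(p,q) := by
    intro p q hpq h1 h2 h3
    have hT'pq : T'.G.Adj p q := (hAdj' p q).mpr (Or.inl ⟨hpq, h2, h3⟩)
    by_cases hup : (T.G.deleteEdges {s(p,q)}).Reachable u p
    · have hup' : ¬ (T.G.deleteEdges {s(p,q)}).Reachable u q := by
        intro h
        exact hbrT hpq (hup.symm.trans h)
      have h1' : s(q,p) ≠ s(u,v) := by rw [show s(q,p) = s(p,q) from Sym2.eq_swap]; exact h1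
      have h2' : s(q,p) ≠ s(u,a) := by rw [show s(q,p) = s(p,q) from Sym2.eq_swap]; exact h2
      have h3' : s(q,p) ≠ s(v,b) := by rw [show s(q,p) = s(p,q) from Sym2.eq_swap]; exact h3
      have hup'' : ¬ (T.G.deleteEdges {s(q,p)}).Reachable u q := by
        rw [show s(q,p) = s(p,q) from Sym2.eq_swap]; exact hup'
      have hside := sideCC q p hpq.symm h1' h2' h3' hup''
      have h := hsize q p q p hpq.symm hT'pq.symm hside
      rw [show s(q,p) = s(p,q) from Sym2.eq_swap] at h
      exact h
    · exact hsize p q p q hpq hT'pq (sideCC p q hpq h1 h2 h3 hup)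
  -- decompositions at the central edge
  have dT_u : splitSide T.G T.leaf u v = splitSide T.G T.leaf a u + splitSide T.G T.leaf a2 u :=
    decomp T.leaf (hbrT hua) (hbrT hua2) huv hua hua2 hav ha2v (Ne.symm ha2a) hNbu hlfu
  have dT_v : splitSide T.G T.leaf v u = splitSide T.G T.leaf b v + splitSide T.G T.leaf b2 v :=
    decomp T.leaf (hbrT hvb) (hbrT hvb2) huv.symm hvb hvb2 hbu hb2u (Ne.symm hb2b) hNbv hlfv
  have dT'_u : splitSide T'.G T'.leaf u v
      = splitSide T'.G T'.leaf a2 u + splitSide T'.G T'.leaf b u :=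
    decomp T'.leaf (hbrT' hT'ua2) (hbrT' hT'ub) hT'uv hT'ua2 hT'ub ha2v hbv ha2b hNbu' hlfu'
  -- a2-side is unchanged
  have sideA2 : splitSide T'.G T'.leaf a2 u = splitSide T.G T.leaf a2 u := by
    have h1 : s(a2,u) ≠ s(u,v) := sne (Or.inl ha2u) (Or.inl ha2v)
    have h2 : s(a2,u) ≠ s(u,a) := sne (Or.inl ha2u) (Or.inl ha2a)
    have h3 : s(a2,u) ≠ s(v,b) := sne (Or.inl ha2v) (Or.inl ha2b)
    have h4 : ¬ (T.G.deleteEdges {s(a2,u)}).Reachable u a2 := by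
      rw [show s(a2,u) = s(u,a2) from Sym2.eq_swap]
      exact hbrT hua2
    exact sideCC a2 u hua2.symm h1 h2 h3 h4
  -- sums to n
  have hnsum : splitSide T.G T.leaf u v + splitSide T.G T.leaf v u = n :=
    splitSide_add hconn (hbrT huv) T.leaf
  have hnsum' : splitSide T'.G T'.leaf u v + splitSide T'.G T'.leaf v u = n :=
    splitSide_add hconn' (hbrT' hT'uv) T'.leaf
  -- central sizes
  have hcsz : splitSizeE T s(u,v)
      = min (splitSide T.G T.leaf u v) (splitSide T.G T.leaf v u) := by
    simp [splitSizeE, Sym2.lift_mk]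
  have hcsz' : splitSizeE T' s(u,v)
      = min (splitSide T'.G T'.leaf u v) (splitSide T'.G T'.leaf v u) := by
    simp [splitSizeE, Sym2.lift_mk]
  have hIQ := hineq u v a a2 b b2 huv hlu hlv hua hua2 (Ne.symm ha2a) hav ha2v hvb hvb2
    (Ne.symm hb2b) hbu hb2u
  have hT'u_eq : splitSide T'.G T'.leaf u v
      = splitSide T.G T.leaf a2 u + splitSide T.G T.leaf b v := by
    rw [dT'_u, sideA2, sideCB]
  have hle : splitSizeE T s(u,v) ≤ splitSizeE T' s(u,v) := by
    rw [hcsz, hcsz']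
    omega
  have hbound' : splitSizeE T' s(u,v) ≤ n / 2 := by
    rw [hcsz']
    omega
  -- remaining Sym2 inequalities
  have nAB : s(u,a) ≠ s(v,b) := sne (Or.inl hUV) (Or.inr hav)
  have nVA_UA : s(v,a) ≠ s(u,a) := sne (Or.inl hUV.symm) (Or.inl hav.symm)
  have nVA_VB : s(v,a) ≠ s(v,b) := sne (Or.inr hab) (Or.inr hav)
  have nUB_UA : s(u,b) ≠ s(u,a) := sne (Or.inr (Ne.symm hab)) (Or.inr hbu)
  have nUB_VB : s(u,b) ≠ s(v,b) := sne (Or.inl hUV) (Or.inl (Ne.symm hbu))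
  have nUB_VA : s(u,b) ≠ s(v,a) := sne (Or.inl hUV) (Or.inl hau.symm)
  have nVA_UV : s(v,a) ≠ s(u,v) := sne (Or.inl hUV.symm) (Or.inr hau)
  have nUB_UV : s(u,b) ≠ s(u,v) := sne (Or.inr hbv) (Or.inl hUV)
  have nUA_UV : s(u,a) ≠ s(u,v) := sne (Or.inr hav) (Or.inl hUV)
  have nVB_UV : s(v,b) ≠ s(u,v) := sne (Or.inl hUV.symm) (Or.inr hbu)
  have hnubE : s(u,b) ∉ T.G.edgeSet := fun h => hnub (T.G.mem_edgeSet.mp h)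
  have hnvaE : s(v,a) ∉ T.G.edgeSet := fun h => hnva (T.G.mem_edgeSet.mp h)
  have memVA : s(v,a) ∈ T'.G.edgeSet := (hE' _).mpr (Or.inr (Or.inr rfl))
  have memUB : s(u,b) ∈ T'.G.edgeSet := (hE' _).mpr (Or.inr (Or.inl rfl))
  have sizeAll : ∀ e, e ∈ T.G.edgeSet → e ≠ s(u,v) → e ≠ s(u,a) → e ≠ s(v,b) →
      splitSizeE T' e = splitSizeE T e := by
    intro e
    induction e using Sym2.ind with
    | _ p q =>
      intro he h1 h2 h3
      exact sizeC p q (T.G.mem_edgeSet.mp he) h1 h2 h3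
  -- finite edge sets
  have hfinA : ({e : Sym2 V | e ∈ T.G.edgeSet ∧ 2 ≤ splitSizeE T e}).Finite := Set.toFinite _
  have hfinA' : ({e : Sym2 V | e ∈ T'.G.edgeSet ∧ 2 ≤ splitSizeE T' e}).Finite := Set.toFinite _
  have hmemA : ∀ e, e ∈ hfinA.toFinset ↔ (e ∈ T.G.edgeSet ∧ 2 ≤ splitSizeE T e) :=
    fun e => hfinA.mem_toFinset
  have hmemA' : ∀ e, e ∈ hfinA'.toFinset ↔ (e ∈ T'.G.edgeSet ∧ 2 ≤ splitSizeE T' e) :=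
    fun e => hfinA'.mem_toFinset
  have hPhiT : Phi T f = ∑ e ∈ hfinA.toFinset, f (splitSizeE T e) := by
    exact finsum_mem_eq_finite_toFinset_sum _ hfinA
  have hPhiT' : Phi T' f = ∑ e ∈ hfinA'.toFinset, f (splitSizeE T' e) := by
    exact finsum_mem_eq_finite_toFinset_sum _ hfinA'
  have split_sum : ∀ (B : Finset (Sym2 V)) (g : Sym2 V → ℝ),
      ∑ e ∈ B, g e = ∑ e ∈ B.erase s(u,v), g e + (if s(u,v) ∈ B then g s(u,v) else 0) := by
    intro B g
    by_cases h : s(u,v) ∈ B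
    · rw [if_pos h, Finset.sum_erase_add B g h]
    · rw [if_neg h, Finset.erase_eq_of_notMem h, add_zero]
  -- the matched part of the two sums agree
  have hmain : ∑ e ∈ hfinA.toFinset.erase s(u,v), f (splitSizeE T e)
      = ∑ e ∈ hfinA'.toFinset.erase s(u,v), f (splitSizeE T' e) := by
    apply Finset.sum_nbij'
      (i := fun e => if e = s(u,a) then s(v,a) else if e = s(v,b) then s(u,b) else e)
      (j := fun e => if e = s(v,a) then s(u,a) else if e = s(u,b) then s(v,b) else e)
    · intro e he
      try dsimp only
      rw [Finset.mem_erase, hmemA] at he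
      obtain ⟨hne, heE, h2⟩ := he
      by_cases hA1 : e = s(u,a)
      · rw [if_pos hA1, Finset.mem_erase, hmemA']
        refine ⟨nVA_UV, memVA, ?_⟩
        rw [sizeA]
        exact hA1 ▸ h2
      · by_cases hA2 : e = s(v,b)
        · rw [if_neg hA1, if_pos hA2, Finset.mem_erase, hmemA']
          refine ⟨nUB_UV, memUB, ?_⟩
          rw [sizeB]
          exact hA2 ▸ h2
        · rw [if_neg hA1, if_neg hA2, Finset.mem_erase, hmemA']
          refine ⟨hne, (hE' e).mpr (Or.inl ⟨heE, hA1, hA2⟩), ?_⟩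
          rw [sizeAll e heE hne hA1 hA2]
          exact h2
    · intro e he
      try dsimp only
      rw [Finset.mem_erase, hmemA'] at he
      obtain ⟨hne, heE, h2⟩ := he
      by_cases hB1 : e = s(v,a)
      · rw [if_pos hB1, Finset.mem_erase, hmemA]
        refine ⟨nUA_UV, T.G.mem_edgeSet.mpr hua, ?_⟩
        rw [← sizeA]
        exact hB1 ▸ h2
      · by_cases hB2 : e = s(u,b)
        · rw [if_neg hB1, if_pos hB2, Finset.mem_erase, hmemA]
          refine ⟨nVB_UV, T.G.mem_edgeSet.mpr hvb, ?_⟩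
          rw [← sizeB]
          exact hB2 ▸ h2
        · rw [if_neg hB1, if_neg hB2, Finset.mem_erase, hmemA]
          obtain ⟨heT, hA1, hA2⟩ : e ∈ T.G.edgeSet ∧ e ≠ s(u,a) ∧ e ≠ s(v,b) := by
            rcases (hE' e).mp heE with h' | h' | h'
            · exact h'
            · exact absurd h' hB2
            · exact absurd h' hB1
          exact ⟨hne, heT, by rw [← sizeAll e heT hne hA1 hA2]; exact h2⟩
    · intro e he
      try dsimp only
      rw [Finset.mem_erase, hmemA] at he
      by_cases hA1 : e = s(u,a)
      · rw [if_pos hA1, if_pos rfl, hA1]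
      · by_cases hA2 : e = s(v,b)
        · rw [if_neg hA1, if_pos hA2, if_neg nUB_VA, if_pos rfl, hA2]
        · have h1 : e ≠ s(v,a) := fun h => hnvaE (h ▸ he.2.1)
          have h2 : e ≠ s(u,b) := fun h => hnubE (h ▸ he.2.1)
          rw [if_neg hA1, if_neg hA2, if_neg h1, if_neg h2]
    · intro e he
      try dsimp only
      rw [Finset.mem_erase, hmemA'] at he
      by_cases hB1 : e = s(v,a)
      · rw [if_pos hB1, if_pos rfl, hB1]
      · by_cases hB2 : e = s(u,b)
        · rw [if_neg hB1, if_pos hB2, if_neg (Ne.symm nAB), if_pos rfl, hB2]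
        · obtain ⟨heT, hA1, hA2⟩ : e ∈ T.G.edgeSet ∧ e ≠ s(u,a) ∧ e ≠ s(v,b) := by
            rcases (hE' e).mp he.2.1 with h' | h' | h'
            · exact h'
            · exact absurd h' hB2
            · exact absurd h' hB1
          rw [if_neg hB1, if_neg hB2, if_neg hA1, if_neg hA2]
    · intro e he
      try dsimp only
      rw [Finset.mem_erase, hmemA] at he
      by_cases hA1 : e = s(u,a)
      · rw [if_pos hA1, sizeA, hA1]
      · by_cases hA2 : e = s(v,b)
        · rw [if_neg hA1, if_pos hA2, sizeB, hA2]
        · rw [if_neg hA1, if_neg hA2, sizeAll e he.2.1 he.1 hA1 hA2]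
  -- final assembly
  rw [hPhiT, hPhiT', split_sum (hfinA.toFinset) _, split_sum (hfinA'.toFinset) _]
  refine add_le_add (le_of_eq hmain) ?_
  have hcT : s(u,v) ∈ hfinA.toFinset ↔ 2 ≤ splitSizeE T s(u,v) :=
    ⟨fun h => ((hmemA _).mp h).2, fun h => (hmemA _).mpr ⟨T.G.mem_edgeSet.mpr huv, h⟩⟩
  have hcT' : s(u,v) ∈ hfinA'.toFinset ↔ 2 ≤ splitSizeE T' s(u,v) :=
    ⟨fun h => ((hmemA' _).mp h).2, fun h => (hmemA' _).mpr ⟨T'.G.mem_edgeSet.mpr hT'uv, h⟩⟩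
  by_cases h2T : 2 ≤ splitSizeE T s(u,v)
  · rw [if_pos (hcT.mpr h2T), if_pos (hcT'.mpr (le_trans h2T hle))]
    rcases lt_or_eq_of_le hle with hlt | heq
    · exact (hfmono _ _ h2T hlt hbound').le
    · rw [heq]
  · rw [if_neg (fun h => h2T (hcT.mp h))]
    by_cases h2T' : s(u,v) ∈ hfinA'.toFinset
    · rw [if_pos h2T']
      exact hf0 _ (hcT'.mp h2T') hbound'
    · rw [if_neg h2T']
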